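/- Let T be a torus with a finite-order automorphism σ of order n. Then the quotient map T → T/[T,σ] induces: (a) an isomorphism X(T/[T,σ]) ≅ X(T)^σ (the σ-invariant characters); (b) an isomorphism π(Y(T)) ≅ Y(T/[T,σ]), where π(y) = (1/n)Σᵢ σ^i(y); and (c) under these identifications, the natural duality between X(T/[T,σ]) and Y(T/[T,σ]) is the restriction of the ℚ-linear extension of the duality between X(T) and Y(T). -/

import Mathlib

/-! Torus model: `T = Hom(X, kˣ)`; `σ` acts by precomposition; the subtorus
`[T,σ] = {t ⋅ σ(t)⁻¹}` is the range of `precomp σ - id`; a cocharacter of `T`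
corresponds to `y ∈ Y = Hom(X, ℤ)` via `λ ↦ (χ ↦ λ ^ (y χ))`. -/

abbrev TorusPts (X : Type*) [AddCommGroup X] (k : Type*) [Field k] :=
  X →+ Additive kˣ

def precomp {X : Type*} [AddCommGroup X] (k : Type*) [Field k] (f : X →+ X) :
    TorusPts X k →+ TorusPts X k where
  toFun t := t.comp f
  map_zero' := by ext x; simp
  map_add' t s := by ext x; simp

def commSub {X : Type*} [AddCommGroup X] (k : Type*) [Field k] (σ : X →+ X) :
    AddSubgroup (TorusPts X k) :=
  AddMonoidHom.range (precomp k σ - AddMonoidHom.id _)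

def cochar {X : Type*} [AddCommGroup X] [Module ℤ X] {k : Type*} [Field k]
    (y : X →ₗ[ℤ] ℤ) (lam : kˣ) : TorusPts X k where
  toFun χ := Additive.ofMul (lam ^ (y χ))
  map_zero' := by simp
  map_add' χ χ' := by simp [map_add, zpow_add]

section Aux
variable {k : Type*} [Field k] [IsAlgClosed k]

noncomputable instance unitsRootableNat : RootableBy kˣ ℕ where
  root a n :=
    if h : n = 0 then 1 else
      Units.mk0 (Classical.choose (IsAlgClosed.exists_pow_nat_eq (a : k) (Nat.pos_of_ne_zero h)))
        (by
          intro h0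
          have := Classical.choose_spec (IsAlgClosed.exists_pow_nat_eq (a : k) (Nat.pos_of_ne_zero h))
          rw [h0, zero_pow h] at this
          exact a.ne_zero this.symm)
  root_zero a := by simp
  root_cancel {n} a hn := by
    have := Classical.choose_spec (IsAlgClosed.exists_pow_nat_eq (a : k) (Nat.pos_of_ne_zero hn))
    ext
    simp [hn, this]

noncomputable instance unitsRootableInt : RootableBy kˣ ℤ := Group.rootableByIntOfRootableByNat kˣ

noncomputable instance addUnitsDivisible : DivisibleBy (Additive kˣ) ℤ where
  div a n := Additive.ofMul (RootableBy.root (Additive.toMul a) n)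
  div_zero a := congrArg Additive.ofMul (RootableBy.root_zero _)
  div_cancel a hn := by
    rw [← ofMul_zpow]
    exact congrArg Additive.ofMul (RootableBy.root_cancel _ hn)

theorem exists_zpow_ne_one {m : ℤ} (hm : m ≠ 0) : ∃ lam : kˣ, lam ^ m ≠ 1 := by
  by_contra h
  push_neg at h
  haveI : NeZero m.natAbs := ⟨Int.natAbs_ne_zero.mpr hm⟩
  haveI hfin : Finite kˣ := by
    have : Function.Injective (fun lam : kˣ => (⟨lam, by
        rw [mem_rootsOfUnity]
        rcases Int.natAbs_eq m with he | he
        · have := h lam; rwa [he, zpow_natCast] at this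
        · have := h lam
          rw [he, zpow_neg, zpow_natCast, inv_eq_one] at this
          exact this⟩ : rootsOfUnity m.natAbs k)) := by
      intro a b hab
      simpa using congrArg Subtype.val hab
    exact Finite.of_injective _ this
  haveI : Finite k := by
    haveI : Finite (kˣ × Bool) := inferInstance
    have hs : Function.Surjective (fun p : kˣ × Bool => if p.2 then ((p.1 : k)) else 0) := by
      intro x
      by_cases hx : x = 0
      · exact ⟨(1, false), hx.symm⟩
      · exact ⟨(Units.mk0 x hx, true), rfl⟩
    exact Finite.of_surjective _ hs
  exact not_finite k

theorem exists_dual {X : Type*} [AddCommGroup X] [Module ℤ X] [Module.Free ℤ X]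
    {x : X} (hx : x ≠ 0) : ∃ f : X →ₗ[ℤ] ℤ, f x ≠ 0 := by
  set b := Module.Free.chooseBasis ℤ X
  have : b.repr x ≠ 0 := fun h => hx (by simpa using congrArg b.repr.symm h)
  obtain ⟨i, hi⟩ : ∃ i, b.repr x i ≠ 0 := by
    by_contra hc
    push_neg at hc
    exact this (Finsupp.ext hc)
  exact ⟨b.coord i, by simpa [Module.Basis.coord_apply] using hi⟩

end Aux

/-- Let `T` be a torus with a finite-order automorphism `σ` of order
`n`.  The quotient map `T → T/[T,σ]` induces:
(a) an isomorphism `X(T/[T,σ]) ≅ X(T)^σ`: a character of `T` factors through the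
quotient (i.e. vanishes on `[T,σ]`) iff it is `σ`-invariant;
(b) an isomorphism `π(Y(T)) ≅ Y(T/[T,σ])`: two cocharacters of `T` induce the same
cocharacter of `T/[T,σ]` iff they have the same image under the averaging map `π`
(equivalently under `1 + σ + ⋯ + σ^{n-1}`);
(c) under these identifications the natural duality is the restriction of the
`ℚ`-linear extension of the duality between `X(T)` and `Y(T)`: for a `σ`-fixed
character `χ` the pairing of `χ` with the class of `y` is computed by
`λ ↦ λ ^ ⟨y, χ⟩`, and `⟨π(y), χ⟩ = ⟨y, χ⟩`, i.e. `∑_{i<n} y (σ^i χ) = n ⬝ y χ`. -/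


theorem mem_commSub_iff {k : Type*} [Field k] [IsAlgClosed k]
    {X : Type*} [AddCommGroup X] (σ : X →+ X) (t : TorusPts X k) :
    t ∈ commSub k σ ↔ ∀ x : X, σ x = x → t x = 0 := by
  constructor
  · rintro ⟨s, rfl⟩ x hx
    show s (σ x) - s x = 0
    rw [hx, sub_self]
  · intro h
    set u : X →ₗ[ℤ] X := σ.toIntLinearMap - LinearMap.id with hu
    have hker : LinearMap.ker u ≤ LinearMap.ker t.toIntLinearMap := by
      intro x hx
      rw [LinearMap.mem_ker] at hx ⊢
      have : σ x = x := by
        have := hx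
        simp only [hu, LinearMap.sub_apply, LinearMap.id_apply, sub_eq_zero,
          AddMonoidHom.coe_toIntLinearMap] at this
        exact this
      exact h x this
    have baer : Module.Baer ℤ (Additive kˣ) := Module.Baer.of_divisible _
    set ubar : (X ⧸ LinearMap.ker u) →ₗ[ℤ] X := (LinearMap.ker u).liftQ u le_rfl with hubar
    have hinj : Function.Injective ubar := by
      rw [← LinearMap.ker_eq_bot]
      exact Submodule.ker_liftQ_eq_bot _ _ _ le_rfl
    obtain ⟨s, hs⟩ := baer.extension_property ubar hinj
      ((LinearMap.ker u).liftQ t.toIntLinearMap hker)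
    refine ⟨s.toAddMonoidHom, ?_⟩
    ext x : 1
    show s (σ x) - s x = t x
    have h1 : s (σ x) - s x = s (u x) := by
      rw [hu]; simp [map_sub]
    have h2 : u x = ubar ((LinearMap.ker u).mkQ x) := by
      rw [hubar, Submodule.mkQ_apply, Submodule.liftQ_apply]
    have h3 := congrArg (fun g => g ((LinearMap.ker u).mkQ x)) hs
    simp only [LinearMap.comp_apply] at h3
    rw [h1, h2, h3, Submodule.mkQ_apply, Submodule.liftQ_apply]
    rfl

theorem quotient_by_commSub_characters_cocharacters_duality
    {k : Type*} [Field k] [IsAlgClosed k]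
    {X : Type*} [AddCommGroup X] [Module.Free ℤ X] [Module.Finite ℤ X]
    (σ : AddAut X) (n : ℕ) (hn : 0 < n) (hord : addOrderOf σ = n) :
    (∀ χ : X,
        (∀ t ∈ commSub k ((σ : AddAut X) : X →+ X), t χ = 0) ↔ σ χ = χ) ∧
    (∀ y y' : X →ₗ[ℤ] ℤ,
        (∀ lam : kˣ,
            ((QuotientAddGroup.mk (cochar y lam) :
                TorusPts X k ⧸ commSub k ((σ : AddAut X) : X →+ X)) =
              QuotientAddGroup.mk (cochar y' lam)))
          ↔ (∑ i ∈ Finset.range n,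
                y ∘ₗ (((i • σ : AddAut X) : X →+ X).toIntLinearMap))
              = (∑ i ∈ Finset.range n,
                y' ∘ₗ (((i • σ : AddAut X) : X →+ X).toIntLinearMap))) ∧
    (∀ (y : X →ₗ[ℤ] ℤ) (χ : X), σ χ = χ →
        (∀ lam : kˣ, (cochar y lam : TorusPts X k) χ = Additive.ofMul (lam ^ (y χ))) ∧
        (∑ i ∈ Finset.range n, y ((i • σ : AddAut X) χ)) = n • y χ) := by
  classical
  set τ : X →+ X := ((σ : AddAut X) : X →+ X) with hτ
  have hcoe : ∀ x : X, τ x = σ x := fun _ => rfl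
  have hpowfix : ∀ (χ : X), σ χ = χ → ∀ i : ℕ, (i • σ : AddAut X) χ = χ := by
    intro χ hχ i
    induction i with
    | zero => rfl
    | succ m ih => rw [succ_nsmul, AddAut.add_apply, hχ, ih]
  have hσn : (n • σ : AddAut X) = 0 := by rw [← hord]; exact addOrderOf_nsmul_eq_zero σ
  -- Part (a)
  have parta : ∀ χ : X, (∀ t ∈ commSub k τ, t χ = 0) ↔ σ χ = χ := by
    intro χ
    constructor
    · intro h
      by_contra hne
      have hx : τ χ - χ ≠ 0 := sub_ne_zero.mpr hne
      obtain ⟨f, hf⟩ := exists_dual hx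
      obtain ⟨lam, hlam⟩ := exists_zpow_ne_one (k := k) hf
      have hmem : (precomp k τ - AddMonoidHom.id (TorusPts X k)) (cochar f lam) ∈ commSub k τ :=
        ⟨cochar f lam, rfl⟩
      have h1 : Additive.ofMul (lam ^ f (τ χ)) - Additive.ofMul (lam ^ f χ) = 0 := h _ hmem
      apply hlam
      have h2 : lam ^ f (τ χ) = lam ^ f χ := Additive.ofMul.injective (sub_eq_zero.mp h1)
      rw [map_sub, zpow_sub, h2]
      simp
    · intro hχ t ht
      exact (mem_commSub_iff τ t).mp ht χ hχ
  -- fixedness of averaged elements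
  have hSfix : ∀ χ : X, σ (∑ i ∈ Finset.range n, (i • σ : AddAut X) χ)
      = ∑ i ∈ Finset.range n, (i • σ : AddAut X) χ := by
    intro χ
    have hmap : σ (∑ i ∈ Finset.range n, (i • σ : AddAut X) χ)
        = ∑ i ∈ Finset.range n, ((i + 1) • σ : AddAut X) χ := by
      rw [map_sum]
      exact Finset.sum_congr rfl fun i _ => by rw [succ_nsmul', AddAut.add_apply]
    rw [hmap]
    have hg : ((n • σ : AddAut X) χ) = ((0 • σ : AddAut X) χ) := by
      rw [hσn, zero_nsmul]
    have e1 : ∑ i ∈ Finset.range (n + 1), (i • σ : AddAut X) χ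
        = (∑ i ∈ Finset.range n, ((i + 1) • σ : AddAut X) χ) + (0 • σ : AddAut X) χ :=
      Finset.sum_range_succ' _ n
    have e2 : ∑ i ∈ Finset.range (n + 1), (i • σ : AddAut X) χ
        = (∑ i ∈ Finset.range n, (i • σ : AddAut X) χ) + (n • σ : AddAut X) χ :=
      Finset.sum_range_succ _ n
    have key := e1.symm.trans e2
    rw [hg] at key
    exact add_right_cancel key
  -- key equivalence
  have keyiff : ∀ d : X →ₗ[ℤ] ℤ,
      (∀ χ : X, σ χ = χ → d χ = 0) ↔
        (∀ χ : X, ∑ i ∈ Finset.range n, d ((i • σ : AddAut X) χ) = 0) := by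
    intro d
    constructor
    · intro h χ
      have : ∑ i ∈ Finset.range n, d ((i • σ : AddAut X) χ)
          = d (∑ i ∈ Finset.range n, (i • σ : AddAut X) χ) := (map_sum d _ _).symm
      rw [this]
      exact h _ (hSfix χ)
    · intro h χ hχ
      have h1 : ∑ i ∈ Finset.range n, d ((i • σ : AddAut X) χ) = n • d χ := by
        rw [Finset.sum_congr rfl fun i _ => by rw [hpowfix χ hχ i]]
        rw [Finset.sum_const, Finset.card_range]
      have hn' : (n : ℤ) ≠ 0 := Int.natCast_ne_zero.mpr hn.ne'
      have h2 := h χ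
      rw [h1, nsmul_eq_mul] at h2
      exact (mul_eq_zero.mp h2).resolve_left hn'
  refine ⟨parta, ?_, ?_⟩
  · -- Part (b)
    intro y y'
    set d : X →ₗ[ℤ] ℤ := y' - y with hd
    have hcochar : ∀ lam : kˣ,
        -(cochar y lam) + cochar y' lam = (cochar d lam : TorusPts X k) := by
      intro lam
      ext χ : 1
      show -(Additive.ofMul (lam ^ y χ)) + Additive.ofMul (lam ^ y' χ)
        = Additive.ofMul (lam ^ d χ)
      rw [← ofMul_inv, ← ofMul_mul]
      congr 1
      rw [hd, LinearMap.sub_apply, sub_eq_add_neg, zpow_add, zpow_neg, mul_comm]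
    have hLHS : (∀ lam : kˣ,
        ((QuotientAddGroup.mk (cochar y lam) :
            TorusPts X k ⧸ commSub k τ) = QuotientAddGroup.mk (cochar y' lam)))
        ↔ (∀ χ : X, σ χ = χ → d χ = 0) := by
      constructor
      · intro h χ hχ
        by_contra hne
        obtain ⟨lam, hlam⟩ := exists_zpow_ne_one (k := k) hne
        have hmem : -(cochar y lam) + cochar y' lam ∈ commSub k τ :=
          (QuotientAddGroup.eq).mp (h lam)
        rw [hcochar lam] at hmem
        have := (mem_commSub_iff τ _).mp hmem χ hχ
        exact hlam (Additive.ofMul.injective this)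
      · intro h lam
        rw [QuotientAddGroup.eq, hcochar lam]
        rw [mem_commSub_iff]
        intro x hx
        show Additive.ofMul (lam ^ d x) = 0
        rw [h x hx, zpow_zero]
        rfl
    have hRHS : ((∑ i ∈ Finset.range n,
          y ∘ₗ (((i • σ : AddAut X) : X →+ X).toIntLinearMap))
        = (∑ i ∈ Finset.range n,
          y' ∘ₗ (((i • σ : AddAut X) : X →+ X).toIntLinearMap)))
        ↔ (∀ χ : X, ∑ i ∈ Finset.range n, d ((i • σ : AddAut X) χ) = 0) := by
      rw [LinearMap.ext_iff]
      constructor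
      · intro h χ
        have h1 := h χ
        simp only [LinearMap.coe_sum, Finset.sum_apply, LinearMap.comp_apply] at h1
        simp only [hd, LinearMap.sub_apply, Finset.sum_sub_distrib]
        rw [sub_eq_zero]
        exact h1.symm
      · intro h χ
        have h1 := h χ
        simp only [hd, LinearMap.sub_apply, Finset.sum_sub_distrib, sub_eq_zero] at h1
        simp only [LinearMap.coe_sum, Finset.sum_apply, LinearMap.comp_apply]
        exact h1.symm
    rw [hLHS, hRHS]
    exact keyiff d
  · -- Part (c)
    intro y χ hχ
    refine ⟨fun lam => rfl, ?_⟩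
    rw [Finset.sum_congr rfl fun i _ => by rw [hpowfix χ hχ i]]
    rw [Finset.sum_const, Finset.card_range]
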